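/- Lah expansion of rising in terms of falling factorials: for all real r and n ∈ ℕ, (x+r)^{n↑} = Σ_{k=0}^n L(n,k)_r (x−r)^{k↓}, where L(n,k)_r = (n!/k!)·(k+2r)^{(n−k)↑}/(n−k)! and y^{k↓} denotes the falling factorial. -/

import Mathlib

open Polynomial Finset

/-- The `r`-Lah number `L(n,k)_r = (n!/k!) · (k+2r)^{(n−k)↑}/(n−k)!`. -/
noncomputable def rLah (r : ℝ) (n k : ℕ) : ℝ :=
  ((n.factorial : ℝ) / (k.factorial : ℝ)) *
    ((ascPochhammer ℝ (n - k)).eval ((k : ℝ) + 2 * r) / ((n - k).factorial : ℝ))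

noncomputable def rLah' (r : ℝ) (n k : ℕ) : ℝ := if k ≤ n then rLah r n k else 0

lemma asc_succ_left_eval (j : ℕ) (y : ℝ) :
    (ascPochhammer ℝ (j+1)).eval y = y * (ascPochhammer ℝ j).eval (y+1) := by
  simp [ascPochhammer_succ_left, eval_comp]

lemma rLah_diag (r : ℝ) (n : ℕ) : rLah r n n = 1 := by
  have h : ((n.factorial : ℝ)) ≠ 0 := Nat.cast_ne_zero.2 n.factorial_ne_zero
  simp [rLah, Nat.sub_self, div_self h]

lemma rLah_key (r : ℝ) (k j : ℕ) :
    rLah r (k+j+2) (k+1) = rLah r (k+j+1) k +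
      (((k+j+1 : ℕ) : ℝ) + (((k+1) : ℕ) : ℝ) + 2*r) * rLah r (k+j+1) (k+1) := by
  have h1 : (k+j+2) - (k+1) = j+1 := by omega
  have h2 : (k+j+1) - k = j+1 := by omega
  have h3 : (k+j+1) - (k+1) = j := by omega
  simp only [rLah, h1, h2, h3]
  rw [ascPochhammer_succ_eval, asc_succ_left_eval]
  have harg : ((k : ℝ) + 2*r) + 1 = ((k+1 : ℕ) : ℝ) + 2*r := by push_cast; ring
  rw [harg]
  have e1 : (((k+j+2).factorial : ℕ) : ℝ) = ((k+j+2 : ℕ) : ℝ) * ((k+j+1).factorial : ℝ) := by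
    rw [show k+j+2 = (k+j+1)+1 from rfl, Nat.factorial_succ]; push_cast; ring
  have e2 : (((k+1).factorial : ℕ) : ℝ) = ((k+1 : ℕ) : ℝ) * (k.factorial : ℝ) := by
    rw [Nat.factorial_succ]; push_cast; ring
  have e3 : (((j+1).factorial : ℕ) : ℝ) = ((j+1 : ℕ) : ℝ) * (j.factorial : ℝ) := by
    rw [Nat.factorial_succ]; push_cast; ring
  rw [e1, e2, e3]
  have f1 : ((k.factorial : ℕ) : ℝ) ≠ 0 := Nat.cast_ne_zero.2 k.factorial_ne_zero
  have f2 : ((j.factorial : ℕ) : ℝ) ≠ 0 := Nat.cast_ne_zero.2 j.factorial_ne_zero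
  have f3 : (((k+j+1).factorial : ℕ) : ℝ) ≠ 0 := Nat.cast_ne_zero.2 (k+j+1).factorial_ne_zero
  have f4 : ((k+1 : ℕ) : ℝ) ≠ 0 := by positivity
  have f5 : ((j+1 : ℕ) : ℝ) ≠ 0 := by positivity
  field_simp
  -- push_cast not needed
  push_cast; ring

lemma rLah'_zero (r : ℝ) (n : ℕ) :
    rLah' r (n+1) 0 = (((n : ℕ) : ℝ) + 2*r) * rLah' r n 0 := by
  simp only [rLah', Nat.zero_le, if_true]
  simp only [rLah, Nat.sub_zero, Nat.cast_zero, zero_add, Nat.factorial_zero, Nat.cast_one,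
    div_one]
  rw [ascPochhammer_succ_eval]
  have f1 : ((n.factorial : ℕ) : ℝ) ≠ 0 := Nat.cast_ne_zero.2 n.factorial_ne_zero
  have f2 : (((n+1).factorial : ℕ) : ℝ) ≠ 0 := Nat.cast_ne_zero.2 (n+1).factorial_ne_zero
  field_simp
  ring

lemma rLah'_rec (r : ℝ) (n k : ℕ) :
    rLah' r (n+1) (k+1)
      = rLah' r n k + (((n : ℕ) : ℝ) + ((k+1 : ℕ) : ℝ) + 2*r) * rLah' r n (k+1) := by
  rcases lt_trichotomy (k+1) n with h | h | h
  · obtain ⟨j, rfl⟩ : ∃ j, n = k+j+2 := ⟨n - (k+2), by omega⟩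
    simp only [rLah', if_pos (by omega : k+1 ≤ k+j+3), if_pos (by omega : k ≤ k+j+2),
      if_pos (by omega : k+1 ≤ k+j+2)]
    have key := rLah_key r k (j+1)
    have ha : k+(j+1)+2 = k+j+3 := by omega
    have hb : k+(j+1)+1 = k+j+2 := by omega
    rw [ha, hb] at key
    exact key
  · subst h
    simp only [rLah', if_pos (by omega : k+1 ≤ k+1+1), if_pos (by omega : k ≤ k+1), le_refl,
      if_true]
    have key := rLah_key r k 0
    have ha : k+0+2 = k+1+1 := by omega
    have hb : k+0+1 = k+1 := by omega
    rw [ha, hb] at key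
    exact key
  · rcases eq_or_lt_of_le (Nat.le_of_lt_succ h) with h' | h'
    · subst h'
      simp only [rLah', le_refl, if_true, if_pos (le_refl _),
        if_neg (by omega : ¬ (n+1 ≤ n))]
      rw [rLah_diag, rLah_diag]
      ring
    · have hk : k ≠ 0 ∧ n < k := ⟨by omega, by omega⟩
      simp [rLah', show ¬ (k+1 ≤ n+1) by omega, show ¬ (k ≤ n) by omega,
        show ¬ (k+1 ≤ n) by omega]

lemma main' (r : ℝ) (n : ℕ) (x : ℝ) :
    (ascPochhammer ℝ n).eval (x + r) =
      ∑ k ∈ Finset.range (n + 1), rLah' r n k * (descPochhammer ℝ k).eval (x - r) := by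
  induction n with
  | zero => simp [rLah', rLah]
  | succ n ih =>
    set F : ℕ → ℝ := fun k => (descPochhammer ℝ k).eval (x - r) with hFdef
    set g : ℕ → ℝ := fun k => ((k : ℝ) + (n : ℝ) + 2*r) * rLah' r n k * F k with hg
    have hF : ∀ k : ℕ, F (k+1) = F k * (x - r - k) := by
      intro k
      simp only [hFdef, descPochhammer_succ_eval]
    have hgsum : ∑ k ∈ Finset.range (n+1), g k
        = ∑ k ∈ Finset.range (n+1), g (k+1) + g 0 := by
      have h1 := Finset.sum_range_succ g (n+1)
      have h2 := Finset.sum_range_succ' g (n+1)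
      have hz : g (n+1) = 0 := by
        simp [hg, rLah', show ¬ (n+1 ≤ n) by omega]
      rw [hz, add_zero] at h1
      rw [← h1, h2]
    rw [ascPochhammer_succ_eval, ih, Finset.sum_range_succ' _ (n+1)]
    calc (∑ k ∈ Finset.range (n+1), rLah' r n k * F k) * (x + r + n)
        = ∑ k ∈ Finset.range (n+1), (rLah' r n k * F (k+1) + g k) := by
          rw [Finset.sum_mul]
          refine Finset.sum_congr rfl fun k _ => ?_
          rw [hF k]; simp only [hg]; ring
      _ = ∑ k ∈ Finset.range (n+1), rLah' r n k * F (k+1)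
            + ∑ k ∈ Finset.range (n+1), g k := Finset.sum_add_distrib
      _ = ∑ k ∈ Finset.range (n+1), rLah' r n k * F (k+1)
            + (∑ k ∈ Finset.range (n+1), g (k+1) + g 0) := by rw [hgsum]
      _ = ∑ k ∈ Finset.range (n+1), (rLah' r n k * F (k+1) + g (k+1)) + g 0 := by
          rw [Finset.sum_add_distrib]; ring
      _ = ∑ k ∈ Finset.range (n+1), rLah' r (n+1) (k+1) * F (k+1) + rLah' r (n+1) 0 * F 0 := by
          congr 1
          · refine Finset.sum_congr rfl fun k _ => ?_
            rw [rLah'_rec]; simp only [hg]; push_cast; ring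
          · rw [rLah'_zero]; simp only [hg]
            push_cast; ring

theorem rising_as_lah_falling (r : ℝ) (n : ℕ) (x : ℝ) :
    (ascPochhammer ℝ n).eval (x + r) =
      ∑ k ∈ Finset.range (n + 1), rLah r n k * (descPochhammer ℝ k).eval (x - r) := by
  rw [main']
  refine Finset.sum_congr rfl fun k hk => ?_
  rw [Finset.mem_range] at hk
  rw [rLah', if_pos (by omega)]
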